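/- For rational numbers α with −α−1 not an integer in {0,…,n}, one has the identity Σ_{m=0}^{n} (−1)^m / (m! (n−m)! (m+α+1)) = 1/((α+1)_{n+1}), where (α+1)_{n+1} = (α+1)(α+2)⋯(α+n+1) is the Pochhammer symbol. -/

import Mathlib

open Finset Polynomial

lemma asc_ne_aux (n : ℕ) (x : ℚ) (h : ∀ k < n, x + k ≠ 0) :
    (ascPochhammer ℚ n).eval x ≠ 0 := by
  induction n with
  | zero => simp
  | succ n ih =>
    rw [ascPochhammer_succ_right]
    simp only [eval_mul, eval_add, eval_X, eval_natCast]
    exact mul_ne_zero (ih fun k hk => h k (hk.trans (Nat.lt_succ_self n)))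
      (h n (Nat.lt_succ_self n))

/-- Partial-fraction identity: for rational `α` with `−α−1` not an integer in
`{0, …, n}`,
`Σ_{m=0}^{n} (−1)^m / (m!(n−m)!(m+α+1)) = 1/((α+1)_{n+1})`. -/
theorem sum_inv_factorial_eq_inv_ascPochhammer (n : ℕ) (α : ℚ)
    (h : ∀ m : ℕ, m ≤ n → α + m + 1 ≠ 0) :
    ∑ m ∈ Finset.range (n + 1),
        (-1 : ℚ) ^ m / ((m.factorial : ℚ) * ((n - m).factorial : ℚ) * (α + m + 1))
      = 1 / (ascPochhammer ℚ (n + 1)).eval (α + 1) := by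
  induction n generalizing α with
  | zero =>
    have h0 := h 0 le_rfl
    simp only [Nat.cast_zero, add_zero] at h0
    simp [ascPochhammer_one]
  | succ n ih =>
    have hA := ih α (fun m hm => h m (hm.trans (Nat.le_succ n)))
    have hB := ih (α + 1) (fun m hm => by
      have h2 := h (m + 1) (Nat.succ_le_succ hm)
      push_cast at h2 ⊢
      intro hc; apply h2; linarith)
    set f : ℕ → ℚ := fun m =>
      (-1 : ℚ) ^ m / ((m.factorial : ℚ) * ((n + 1 - m).factorial : ℚ) * (α + m + 1)) with hf
    have key : ((n : ℚ) + 1) * ∑ m ∈ range (n + 2), f m =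
        (∑ m ∈ range (n + 1),
          (-1 : ℚ) ^ m / ((m.factorial : ℚ) * ((n - m).factorial : ℚ) * (α + m + 1)))
        - ∑ m ∈ range (n + 1),
          (-1 : ℚ) ^ m / ((m.factorial : ℚ) * ((n - m).factorial : ℚ) * (α + 1 + m + 1)) := by
      rw [Finset.mul_sum]
      have hsplit : ∀ m ∈ range (n + 2), ((n : ℚ) + 1) * f m =
          (((n : ℚ) + 1) - m) * f m + (m : ℚ) * f m := by
        intro m _; ring
      rw [Finset.sum_congr rfl hsplit, Finset.sum_add_distrib]
      have e1 : ∑ m ∈ range (n + 2), (((n : ℚ) + 1) - m) * f m =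
          ∑ m ∈ range (n + 1),
            (-1 : ℚ) ^ m / ((m.factorial : ℚ) * ((n - m).factorial : ℚ) * (α + m + 1)) := by
        rw [Finset.sum_range_succ]
        have hlast : (((n : ℚ) + 1) - (n + 1 : ℕ)) * f (n + 1) = 0 := by
          push_cast; ring
        rw [hlast, add_zero]
        apply Finset.sum_congr rfl
        intro m hm
        rw [Finset.mem_range] at hm
        have hm' : m ≤ n := Nat.lt_succ_iff.mp hm
        have hfac : ((n + 1 - m).factorial : ℚ) = ((n - m : ℕ) + 1 : ℚ) * ((n - m).factorial : ℚ) := by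
          have : n + 1 - m = (n - m) + 1 := by omega
          rw [this, Nat.factorial_succ]; push_cast; ring
        have hcast : ((n : ℚ) + 1) - m = ((n - m : ℕ) : ℚ) + 1 := by
          rw [Nat.cast_sub hm']; ring
        have hm1 : α + m + 1 ≠ 0 := h m (hm'.trans (Nat.le_succ n))
        have hne : ((n - m : ℕ) : ℚ) + 1 ≠ 0 := by positivity
        have hfm : (m.factorial : ℚ) ≠ 0 := Nat.cast_ne_zero.mpr m.factorial_ne_zero
        have hfnm : ((n - m).factorial : ℚ) ≠ 0 := Nat.cast_ne_zero.mpr (n - m).factorial_ne_zero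
        rw [hf]
        simp only []
        rw [hcast, hfac]
        have hD : (m.factorial : ℚ) * ((((n - m : ℕ) : ℚ) + 1) * ((n - m).factorial : ℚ)) * (α + m + 1)
            = (((n - m : ℕ) : ℚ) + 1) * ((m.factorial : ℚ) * ((n - m).factorial : ℚ) * (α + m + 1)) := by
          ring
        rw [hD, ← mul_div_assoc, mul_div_mul_left _ _ hne]
      have e2 : ∑ m ∈ range (n + 2), (m : ℚ) * f m =
          - ∑ m ∈ range (n + 1),
            (-1 : ℚ) ^ m / ((m.factorial : ℚ) * ((n - m).factorial : ℚ) * (α + 1 + m + 1)) := by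
        rw [Finset.sum_range_succ']
        have h0 : ((0 : ℕ) : ℚ) * f 0 = 0 := by simp
        rw [h0, add_zero, ← Finset.sum_neg_distrib]
        apply Finset.sum_congr rfl
        intro i hi
        rw [Finset.mem_range] at hi
        have hi' : i ≤ n := Nat.lt_succ_iff.mp hi
        have hfac : (((i + 1) : ℕ).factorial : ℚ) = ((i : ℚ) + 1) * (i.factorial : ℚ) := by
          rw [Nat.factorial_succ]; push_cast; ring
        have hsub : n + 1 - (i + 1) = n - i := by omega
        have hne : (i : ℚ) + 1 ≠ 0 := by positivity
        have hfm : (i.factorial : ℚ) ≠ 0 := Nat.cast_ne_zero.mpr i.factorial_ne_zero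
        have hfnm : ((n - i).factorial : ℚ) ≠ 0 := Nat.cast_ne_zero.mpr (n - i).factorial_ne_zero
        have hden : α + (i + 1 : ℕ) + 1 ≠ 0 := h (i + 1) (Nat.succ_le_succ hi')
        push_cast at hden
        rw [hf]
        simp only []
        rw [hsub, hfac]
        push_cast
        rw [pow_succ]
        have hden2 : α + ((i : ℚ) + 1) + 1 ≠ 0 := hden
        have hden3 : α + 1 + (i : ℚ) + 1 ≠ 0 := by intro hc; apply hden; linarith
        field_simp [hden2, hden3, hne, hfm, hfnm]
        ring
      rw [e1, e2]; ring
    -- now relate Pochhammer values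
    set a := (ascPochhammer ℚ (n + 1)).eval (α + 1) with ha_def
    set b := (ascPochhammer ℚ (n + 1)).eval (α + 1 + 1) with hb_def
    have hP1 : (ascPochhammer ℚ (n + 2)).eval (α + 1) = a * (α + 1 + (n + 1 : ℕ)) := by
      rw [ascPochhammer_succ_right]
      simp [ha_def]
    have hP2 : (ascPochhammer ℚ (n + 2)).eval (α + 1) = (α + 1) * b := by
      rw [ascPochhammer_succ_left]
      simp [hb_def, eval_comp]
    have ha : a ≠ 0 := by
      apply asc_ne_aux
      intro k hk
      have := h k (by omega)
      intro hc; apply this; linarith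
    have hb : b ≠ 0 := by
      apply asc_ne_aux
      intro k hk
      have := h (k + 1) (by omega)
      push_cast at this
      intro hc; apply this; linarith
    have hn2 : α + 1 + ((n : ℚ) + 1) ≠ 0 := by
      have := h (n + 1) le_rfl
      push_cast at this
      intro hc; apply this; linarith
    have hn1 : (n : ℚ) + 1 ≠ 0 := by positivity
    rw [hA, hB] at key
    show ∑ m ∈ range (n + 2), f m = 1 / (ascPochhammer ℚ (n + 2)).eval (α + 1)
    have hab : a * (α + 1 + ((n : ℚ) + 1)) = (α + 1) * b := by
      have := hP1.symm.trans hP2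
      push_cast at this
      linarith [this]
    rw [hP1]
    push_cast
    have hS : ∑ m ∈ range (n + 2), f m = (1 / a - 1 / b) / ((n : ℚ) + 1) := by
      field_simp at key ⊢
      linarith [key]
    rw [hS]
    field_simp
    linear_combination (-1) * hab
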